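/- Let N ≥ 1 and let χ be a C^N function on an open interval (t₀, t₁) ⊆ ℝ. Then there exists a C^N function η on (t₀, t₁) such that 2t·η'(t) + 2η(t) = χ(t) for all t in (t₀, t₁). (Note this holds even when 0 ∈ (t₀,t₁), where the ODE is singular.) -/

import Mathlib

open Set MeasureTheory intervalIntegral

namespace SingularOdeAux

variable {t₀ t₁ : ℝ}

/-- Points `s * x` with `s ∈ [0,1]` stay in the interval when `0` and `x` are in it. -/
lemma smul_mem_Ioo (h0 : (0:ℝ) ∈ Set.Ioo t₀ t₁) {x : ℝ} (hx : x ∈ Set.Ioo t₀ t₁)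
    {s : ℝ} (hs0 : 0 ≤ s) (hs1 : s ≤ 1) : s * x ∈ Set.Ioo t₀ t₁ := by
  have hconv : Set.uIcc (0:ℝ) x ⊆ Set.Ioo t₀ t₁ :=
    Set.ordConnected_Ioo.uIcc_subset h0 hx
  apply hconv
  rcases le_total x 0 with hx0 | hx0
  · exact Set.mem_uIcc.2 (Or.inr ⟨by nlinarith, by nlinarith⟩)
  · exact Set.mem_uIcc.2 (Or.inl ⟨by nlinarith, by nlinarith⟩)

/-- Derivative of the parametric integral `t ↦ ∫ s in 0..1, s^k * g (s*t)`. -/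
lemma hasDerivAt_A (h0 : (0:ℝ) ∈ Set.Ioo t₀ t₁) (k : ℕ) (g : ℝ → ℝ)
    (hg : ContDiffOn ℝ 1 g (Set.Ioo t₀ t₁)) {t : ℝ} (ht : t ∈ Set.Ioo t₀ t₁) :
    HasDerivAt (fun t => ∫ s in (0:ℝ)..1, s ^ k * g (s * t))
      (∫ s in (0:ℝ)..1, s ^ (k+1) * deriv g (s * t)) t := by
  have hopen : IsOpen (Set.Ioo t₀ t₁) := isOpen_Ioo
  obtain ⟨ε, hε, hball⟩ : ∃ ε > 0, Metric.closedBall t ε ⊆ Set.Ioo t₀ t₁ := by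
    rcases Metric.isOpen_iff.1 hopen t ht with ⟨ε, hε, hb⟩
    exact ⟨ε/2, by linarith, (Metric.closedBall_subset_ball (by linarith)).trans hb⟩
  have hmem : ∀ x ∈ Metric.ball t ε, ∀ s : ℝ, 0 ≤ s → s ≤ 1 → s * x ∈ Set.Ioo t₀ t₁ := by
    intro x hx s hs0 hs1
    exact smul_mem_Ioo h0 (hball (Metric.ball_subset_closedBall hx)) hs0 hs1
  have htmem : ∀ s : ℝ, 0 ≤ s → s ≤ 1 → s * t ∈ Set.Ioo t₀ t₁ := fun s hs0 hs1 =>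
    smul_mem_Ioo h0 ht hs0 hs1
  have hgc : ContinuousOn g (Set.Ioo t₀ t₁) := hg.continuousOn
  have hg'c : ContinuousOn (deriv g) (Set.Ioo t₀ t₁) :=
    hg.continuousOn_deriv_of_isOpen hopen le_rfl
  -- compact set containing all relevant points
  set K : Set ℝ := Set.Icc (min (t - ε) 0) (max (t + ε) 0) with hK
  have hKIoo : K ⊆ Set.Ioo t₀ t₁ := by
    have h1 : t - ε ∈ Set.Ioo t₀ t₁ := hball (by
      rw [Metric.mem_closedBall, Real.dist_eq, abs_le]; constructor <;> linarith)
    have h2 : t + ε ∈ Set.Ioo t₀ t₁ := hball (by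
      rw [Metric.mem_closedBall, Real.dist_eq, abs_le]; constructor <;> linarith)
    intro x hx
    obtain ⟨hx1, hx2⟩ := hx
    constructor
    · rcases le_total (t - ε) 0 with h | h
      · exact lt_of_lt_of_le h1.1 (le_trans (by simp [min_eq_left h]) hx1)
      · exact lt_of_lt_of_le h0.1 (le_trans (by simp [min_eq_right h]) hx1)
    · rcases le_total (t + ε) 0 with h | h
      · exact lt_of_le_of_lt (le_trans hx2 (by simp [max_eq_right h])) h0.2
      · exact lt_of_le_of_lt (le_trans hx2 (by simp [max_eq_left h])) h2.2
  have hmemK : ∀ x ∈ Metric.ball t ε, ∀ s : ℝ, 0 ≤ s → s ≤ 1 → s * x ∈ K := by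
    intro x hx s hs0 hs1
    rw [Metric.mem_ball, Real.dist_eq, abs_lt] at hx
    constructor
    · rcases le_total x 0 with h | h
      · exact le_trans (min_le_left _ _) (by nlinarith)
      · exact le_trans (min_le_right _ _) (by nlinarith)
    · rcases le_total x 0 with h | h
      · exact le_trans (by nlinarith) (le_max_right _ _)
      · exact le_trans (by nlinarith) (le_max_left _ _)
  have hKc : IsCompact K := isCompact_Icc
  obtain ⟨C, hC⟩ : ∃ C, ∀ x ∈ K, ‖deriv g x‖ ≤ C :=
    hKc.exists_bound_of_continuousOn (hg'c.mono hKIoo)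
  have h := intervalIntegral.hasDerivAt_integral_of_dominated_loc_of_deriv_le
    (F := fun x s => s ^ k * g (s * x)) (F' := fun x s => s ^ (k+1) * deriv g (s * x))
    (x₀ := t) (s := Metric.ball t ε) (μ := volume) (a := 0) (b := 1) (bound := fun _ => C) (Metric.ball_mem_nhds t hε)
    ?_ ?_ ?_ ?_ ?_ ?_
  · exact h.2
  · -- measurability of F x near t
    filter_upwards [Metric.ball_mem_nhds t hε] with x hx
    apply ContinuousOn.aestronglyMeasurable _ measurableSet_uIoc
    have : Set.uIoc (0:ℝ) 1 ⊆ Set.Icc 0 1 := by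
      rw [Set.uIoc_of_le (by norm_num)]; exact Set.Ioc_subset_Icc_self
    apply ContinuousOn.mono _ this
    exact (continuousOn_pow k).mul
      ((hgc.comp (continuousOn_id.mul continuousOn_const)) (fun s hs => hmem x hx s hs.1 hs.2))
  · -- integrability of F t
    apply ContinuousOn.intervalIntegrable
    rw [Set.uIcc_of_le (by norm_num : (0:ℝ) ≤ 1)]
    exact (continuousOn_pow k).mul
      ((hgc.comp (continuousOn_id.mul continuousOn_const)) (fun s hs => htmem s hs.1 hs.2))
  · -- measurability of F' t
    apply ContinuousOn.aestronglyMeasurable _ measurableSet_uIoc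
    have : Set.uIoc (0:ℝ) 1 ⊆ Set.Icc 0 1 := by
      rw [Set.uIoc_of_le (by norm_num)]; exact Set.Ioc_subset_Icc_self
    apply ContinuousOn.mono _ this
    exact (continuousOn_pow (k+1)).mul
      ((hg'c.comp (continuousOn_id.mul continuousOn_const)) (fun s hs => htmem s hs.1 hs.2))
  · -- bound
    filter_upwards with s hs x hx
    rw [Set.uIoc_of_le (by norm_num : (0:ℝ) ≤ 1)] at hs
    have hsK : s * x ∈ K := hmemK x hx s hs.1.le hs.2
    have h1 : ‖s ^ (k+1)‖ ≤ 1 := by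
      rw [Real.norm_eq_abs, abs_of_nonneg (pow_nonneg hs.1.le _)]
      exact pow_le_one₀ hs.1.le hs.2
    calc ‖s ^ (k+1) * deriv g (s * x)‖ = ‖s ^ (k+1)‖ * ‖deriv g (s * x)‖ := norm_mul _ _
      _ ≤ 1 * C := mul_le_mul h1 (hC _ hsK) (norm_nonneg _) zero_le_one
      _ = C := one_mul C
  · exact intervalIntegrable_const
  · -- differentiability
    filter_upwards with s hs x hx
    rw [Set.uIoc_of_le (by norm_num : (0:ℝ) ≤ 1)] at hs
    have hsx : s * x ∈ Set.Ioo t₀ t₁ := hmem x hx s hs.1.le hs.2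
    have hgd : DifferentiableAt ℝ g (s * x) :=
      (hg.contDiffAt (hopen.mem_nhds hsx)).differentiableAt one_ne_zero
    have h1 : HasDerivAt (fun x : ℝ => s * x) s x := by
      simpa using (hasDerivAt_id x).const_mul s
    have h2 : HasDerivAt (fun x => g (s * x)) (deriv g (s * x) * s) x :=
      (hgd.hasDerivAt).comp x h1
    have := h2.const_mul (s ^ k)
    exact this.congr_deriv (by ring)

/-- Smoothness of the parametric integral, by induction on `n`. -/
lemma contDiffOn_A (h0 : (0:ℝ) ∈ Set.Ioo t₀ t₁) (n : ℕ) :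
    ∀ (k : ℕ) (g : ℝ → ℝ), ContDiffOn ℝ n g (Set.Ioo t₀ t₁) →
      ContDiffOn ℝ n (fun t => ∫ s in (0:ℝ)..1, s ^ k * g (s * t)) (Set.Ioo t₀ t₁) := by
  have hopen : IsOpen (Set.Ioo t₀ t₁) := isOpen_Ioo
  induction n with
  | zero =>
    intro k g hg
    rw [show ((0:ℕ):WithTop ℕ∞) = 0 by norm_cast] at hg ⊢
    rw [contDiffOn_zero] at hg ⊢
    intro t ht
    apply ContinuousAt.continuousWithinAt
    obtain ⟨ε, hε, hball⟩ : ∃ ε > 0, Metric.closedBall t ε ⊆ Set.Ioo t₀ t₁ := by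
      rcases Metric.isOpen_iff.1 hopen t ht with ⟨ε, hε, hb⟩
      exact ⟨ε/2, by linarith, (Metric.closedBall_subset_ball (by linarith)).trans hb⟩
    have hmem : ∀ x ∈ Metric.ball t ε, ∀ s : ℝ, 0 ≤ s → s ≤ 1 → s * x ∈ Set.Ioo t₀ t₁ := by
      intro x hx s hs0 hs1
      exact smul_mem_Ioo h0 (hball (Metric.ball_subset_closedBall hx)) hs0 hs1
    set K : Set ℝ := Set.Icc (min (t - ε) 0) (max (t + ε) 0) with hK
    have hKIoo : K ⊆ Set.Ioo t₀ t₁ := by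
      have h1 : t - ε ∈ Set.Ioo t₀ t₁ := hball (by
        rw [Metric.mem_closedBall, Real.dist_eq, abs_le]; constructor <;> linarith)
      have h2 : t + ε ∈ Set.Ioo t₀ t₁ := hball (by
        rw [Metric.mem_closedBall, Real.dist_eq, abs_le]; constructor <;> linarith)
      intro x hx
      obtain ⟨hx1, hx2⟩ := hx
      constructor
      · rcases le_total (t - ε) 0 with h | h
        · exact lt_of_lt_of_le h1.1 (le_trans (by simp [min_eq_left h]) hx1)
        · exact lt_of_lt_of_le h0.1 (le_trans (by simp [min_eq_right h]) hx1)
      · rcases le_total (t + ε) 0 with h | h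
        · exact lt_of_le_of_lt (le_trans hx2 (by simp [max_eq_right h])) h0.2
        · exact lt_of_le_of_lt (le_trans hx2 (by simp [max_eq_left h])) h2.2
    have hmemK : ∀ x ∈ Metric.ball t ε, ∀ s : ℝ, 0 ≤ s → s ≤ 1 → s * x ∈ K := by
      intro x hx s hs0 hs1
      rw [Metric.mem_ball, Real.dist_eq, abs_lt] at hx
      constructor
      · rcases le_total x 0 with h | h
        · exact le_trans (min_le_left _ _) (by nlinarith)
        · exact le_trans (min_le_right _ _) (by nlinarith)
      · rcases le_total x 0 with h | h
        · exact le_trans (by nlinarith) (le_max_right _ _)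
        · exact le_trans (by nlinarith) (le_max_left _ _)
    obtain ⟨C, hC⟩ : ∃ C, ∀ x ∈ K, ‖g x‖ ≤ C :=
      isCompact_Icc.exists_bound_of_continuousOn (hg.mono hKIoo)
    apply intervalIntegral.continuousAt_of_dominated_interval (bound := fun _ => C)
    · filter_upwards [Metric.ball_mem_nhds t hε] with x hx
      apply ContinuousOn.aestronglyMeasurable _ measurableSet_uIoc
      have : Set.uIoc (0:ℝ) 1 ⊆ Set.Icc 0 1 := by
        rw [Set.uIoc_of_le (by norm_num)]; exact Set.Ioc_subset_Icc_self
      apply ContinuousOn.mono _ this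
      exact (continuousOn_pow k).mul
        ((hg.comp (continuousOn_id.mul continuousOn_const)) (fun s hs => hmem x hx s hs.1 hs.2))
    · filter_upwards [Metric.ball_mem_nhds t hε] with x hx
      filter_upwards with s hs
      rw [Set.uIoc_of_le (by norm_num : (0:ℝ) ≤ 1)] at hs
      have hsK : s * x ∈ K := hmemK x hx s hs.1.le hs.2
      have h1 : ‖s ^ k‖ ≤ 1 := by
        rw [Real.norm_eq_abs, abs_of_nonneg (pow_nonneg hs.1.le _)]
        exact pow_le_one₀ hs.1.le hs.2
      calc ‖s ^ k * g (s * x)‖ = ‖s ^ k‖ * ‖g (s * x)‖ := norm_mul _ _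
        _ ≤ 1 * C := mul_le_mul h1 (hC _ hsK) (norm_nonneg _) zero_le_one
        _ = C := one_mul C
    · exact intervalIntegrable_const
    · filter_upwards with s hs
      rw [Set.uIoc_of_le (by norm_num : (0:ℝ) ≤ 1)] at hs
      have hsx : s * t ∈ Set.Ioo t₀ t₁ := smul_mem_Ioo h0 ht hs.1.le hs.2
      have : ContinuousAt (fun x => g (s * x)) t := by
        apply ContinuousAt.comp
        · exact (hg.continuousAt (hopen.mem_nhds hsx))
        · exact (continuous_const.mul continuous_id).continuousAt
      exact (continuousAt_const).mul this
  | succ n ih =>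
    intro k g hg
    have hg1 : ContDiffOn ℝ 1 g (Set.Ioo t₀ t₁) := by
      apply hg.of_le
      exact_mod_cast Nat.one_le_iff_ne_zero.2 (Nat.succ_ne_zero n)
    have hderiv : ∀ t ∈ Set.Ioo t₀ t₁,
        HasDerivAt (fun t => ∫ s in (0:ℝ)..1, s ^ k * g (s * t))
          (∫ s in (0:ℝ)..1, s ^ (k+1) * deriv g (s * t)) t :=
      fun t ht => hasDerivAt_A h0 k g hg1 ht
    have hg' : ContDiffOn ℝ n (deriv g) (Set.Ioo t₀ t₁) := by
      apply hg.deriv_of_isOpen hopen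
      exact_mod_cast le_refl (n+1 : ℕ)
    have key := ih (k+1) (deriv g) hg'
    have : ((n+1 : ℕ) : WithTop ℕ∞) = (n : WithTop ℕ∞) + 1 := by push_cast; ring
    rw [this, contDiffOn_succ_iff_deriv_of_isOpen hopen]
    refine ⟨fun t ht => ((hderiv t ht).differentiableAt).differentiableWithinAt, ?_, ?_⟩
    · intro h; simp at h
    · apply key.congr
      intro t ht
      exact (hderiv t ht).deriv

end SingularOdeAux

theorem singular_ode_solvability_A (N : ℕ) (hN : 1 ≤ N) (t₀ t₁ : ℝ) (χ : ℝ → ℝ)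
    (hχ : ContDiffOn ℝ N χ (Set.Ioo t₀ t₁)) :
    ∃ η : ℝ → ℝ, ContDiffOn ℝ N η (Set.Ioo t₀ t₁) ∧
      ∀ t ∈ Set.Ioo t₀ t₁, 2 * t * deriv η t + 2 * η t = χ t := by
  have hopen : IsOpen (Set.Ioo t₀ t₁) := isOpen_Ioo
  by_cases h0 : (0:ℝ) ∈ Set.Ioo t₀ t₁
  · -- the singular case: 0 lies in the interval
    refine ⟨fun t => (2:ℝ)⁻¹ * ∫ s in (0:ℝ)..1, s ^ 0 * χ (s * t), ?_, ?_⟩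
    · exact (SingularOdeAux.contDiffOn_A h0 N 0 χ hχ).const_smul (2:ℝ)⁻¹
    · intro t ht
      have hχ1 : ContDiffOn ℝ 1 χ (Set.Ioo t₀ t₁) := hχ.of_le (by exact_mod_cast hN)
      have hd := (SingularOdeAux.hasDerivAt_A h0 0 χ hχ1 ht).const_mul (2:ℝ)⁻¹
      rw [hd.deriv]
      have hχc : ContinuousOn χ (Set.Ioo t₀ t₁) := hχ.continuousOn
      have hχ'c : ContinuousOn (deriv χ) (Set.Ioo t₀ t₁) :=
        hχ.continuousOn_deriv_of_isOpen hopen (by exact_mod_cast hN)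
      have hmapsto : ∀ s ∈ Set.uIcc (0:ℝ) 1, s * t ∈ Set.Ioo t₀ t₁ := by
        intro s hs
        rw [Set.uIcc_of_le (by norm_num : (0:ℝ) ≤ 1)] at hs
        exact SingularOdeAux.smul_mem_Ioo h0 ht hs.1 hs.2
      have hi1 : IntervalIntegrable (fun s => t * (s ^ 1 * deriv χ (s * t))) volume 0 1 := by
        apply ContinuousOn.intervalIntegrable
        exact continuousOn_const.mul ((continuousOn_pow 1).mul
          ((hχ'c.comp (continuousOn_id.mul continuousOn_const)) hmapsto))
      have hi2 : IntervalIntegrable (fun s => s ^ 0 * χ (s * t)) volume 0 1 := by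
        apply ContinuousOn.intervalIntegrable
        exact (continuousOn_pow 0).mul
          ((hχc.comp (continuousOn_id.mul continuousOn_const)) hmapsto)
      have hftc : ∫ s in (0:ℝ)..1, (t * (s ^ 1 * deriv χ (s * t)) + s ^ 0 * χ (s * t))
          = χ t := by
        have hderiv : ∀ s ∈ Set.uIcc (0:ℝ) 1,
            HasDerivAt (fun s => s * χ (s * t))
              (t * (s ^ 1 * deriv χ (s * t)) + s ^ 0 * χ (s * t)) s := by
          intro s hs
          have hst := hmapsto s hs
          have hχd : DifferentiableAt ℝ χ (s * t) :=
            (hχ1.contDiffAt (hopen.mem_nhds hst)).differentiableAt one_ne_zero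
          have h1 : HasDerivAt (fun s : ℝ => s * t) t s := by
            simpa using (hasDerivAt_id s).mul_const t
          have h2 : HasDerivAt (fun s => χ (s * t)) (deriv χ (s * t) * t) s :=
            (hχd.hasDerivAt).comp s h1
          have h3 := (hasDerivAt_id s).mul h2
          exact h3.congr_deriv (by simp only [id, pow_one, pow_zero]; ring)
        have hint : IntervalIntegrable
            (fun s => t * (s ^ 1 * deriv χ (s * t)) + s ^ 0 * χ (s * t)) volume 0 1 :=
          hi1.add hi2
        have := intervalIntegral.integral_eq_sub_of_hasDerivAt hderiv hint
        rw [this]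
        simp
      rw [← hftc, intervalIntegral.integral_add hi1 hi2, intervalIntegral.integral_const_mul]
      ring
  · -- the regular case: 0 not in the interval
    rcases Set.eq_empty_or_nonempty (Set.Ioo t₀ t₁) with he | hne
    · exact ⟨0, by rw [he]; intro x hx; exact absurd hx (Set.notMem_empty x), by rw [he]; intro t ht; exact absurd ht (Set.notMem_empty t)⟩
    have hlt : t₀ < t₁ := Set.nonempty_Ioo.1 hne
    set c := (t₀ + t₁) / 2 with hc
    have hcmem : c ∈ Set.Ioo t₀ t₁ := ⟨by simp [hc]; linarith, by simp [hc]; linarith⟩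
    set F := fun t => ∫ u in c..t, χ u with hF
    have hχc : ContinuousOn χ (Set.Ioo t₀ t₁) := hχ.continuousOn
    have hFd : ∀ t ∈ Set.Ioo t₀ t₁, HasDerivAt F (χ t) t := by
      intro t ht
      apply intervalIntegral.integral_hasDerivAt_right
      · apply ContinuousOn.intervalIntegrable
        exact hχc.mono (Set.ordConnected_Ioo.uIcc_subset hcmem ht)
      · exact ⟨Set.Ioo t₀ t₁, hopen.mem_nhds ht, (hχc.aestronglyMeasurable hopen.measurableSet)⟩
      · exact hχc.continuousAt (hopen.mem_nhds ht)
    have hFcd : ContDiffOn ℝ (N+1 : ℕ) F (Set.Ioo t₀ t₁) := by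
      have : ((N+1 : ℕ) : WithTop ℕ∞) = (N : WithTop ℕ∞) + 1 := by push_cast; ring
      rw [this, contDiffOn_succ_iff_deriv_of_isOpen hopen]
      refine ⟨fun t ht => ((hFd t ht).differentiableAt).differentiableWithinAt, ?_, ?_⟩
      · intro h; simp at h
      · apply hχ.congr
        intro t ht
        exact (hFd t ht).deriv
    have htne : ∀ t ∈ Set.Ioo t₀ t₁, t ≠ 0 := fun t ht hteq => h0 (hteq ▸ ht)
    refine ⟨fun t => F t / (2 * t), ?_, ?_⟩
    · apply ContDiffOn.div
      · apply hFcd.of_le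
        exact_mod_cast Nat.le_succ N
      · exact (contDiff_const.mul contDiff_id).contDiffOn
      · intro t ht
        simpa using htne t ht
    · intro t ht
      have htn : t ≠ 0 := htne t ht
      have h2t : (2:ℝ) * t ≠ 0 := by simpa using htn
      have hd : HasDerivAt (fun t => F t / (2 * t))
          ((χ t * (2 * t) - F t * 2) / (2 * t) ^ 2) t := by
        apply (hFd t ht).div _ h2t
        simpa using (hasDerivAt_id t).const_mul 2
      rw [hd.deriv]
      field_simp
      ring
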